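/- Fix r ≥ 1 and n : Fin r → ℕ with n i ≥ 2 for all i. For an exponent vector k : Fin r → ℕ with k i ≤ n i for all i, define m(k) i = min (k i) (n i − k i), X(k) = {i | n i < 2·(k i) ∧ k i < n i}, and Y(k) = {i | 0 < k i ∧ 2·(k i) < n i}. Let I⁰ = {i | n i is even} and I¹ = {i | n i is odd}. Then the number of distinct values of the unordered invariant k ↦ (m(k), {X(k), Y(k)}) (where {X(k), Y(k)} is an unordered pair of subsets of Fin r), as k ranges over all exponent vectors, equals 2^{|I⁰|} + Σ_{∅ ≠ K ⊆ Fin r} 2^{|I⁰| + |K ∩ I¹| − 1} · ∏_{i ∈ K} ⌊(n i − 1)/2⌋. (By completeness of the divisorial invariant, this is the number N(R,W) of isomorphism classes of elementary matrix factorizations in HEF(R,W) for a critically-finite W = p₁^{n₁}···p_r^{n_r} over a Bézout domain R with pairwise non-associated primes p_i.) -/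

import Mathlib

open Finset

namespace HEFAux

/-- Per-coordinate ordered invariant. -/
def phi (N : ℕ) (k : Fin (N + 1)) : ℕ × Bool × Bool :=
  (min (k : ℕ) (N - (k : ℕ)), decide (N < 2 * (k : ℕ) ∧ (k : ℕ) < N),
    decide (0 < (k : ℕ) ∧ 2 * (k : ℕ) < N))

lemma card_image_phi (N : ℕ) (hN : 1 ≤ N) :
    ((univ : Finset (Fin (N + 1))).image (phi N)).card = N := by
  have key : (univ : Finset (Fin (N + 1))).image (phi N)
      = ((univ : Finset (Fin (N + 1))).filter fun k : Fin (N + 1) => (k : ℕ) < N).image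
          (phi N) := by
    apply Finset.Subset.antisymm
    · intro t ht
      simp only [mem_image, mem_univ, true_and] at ht
      obtain ⟨k, rfl⟩ := ht
      by_cases hk : (k : ℕ) < N
      · exact mem_image_of_mem _ (by simp only [mem_filter, mem_univ, true_and]; exact hk)
      · have hkN : (k : ℕ) = N := by have := k.is_le; omega
        have h0 : phi N k = phi N ⟨0, by omega⟩ := by
          simp only [phi, hkN, Prod.mk.injEq, decide_eq_decide]
          exact ⟨by omega, by omega, by omega⟩
        rw [h0]
        exact mem_image_of_mem _
          (by simp only [mem_filter, mem_univ, true_and]; exact hN)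
    · exact image_subset_image (filter_subset _ _)
  have himg : ((univ : Finset (Fin (N + 1))).filter fun k : Fin (N + 1) => (k : ℕ) < N)
      = (univ : Finset (Fin N)).image (Fin.castSucc) := by
    ext k
    simp only [mem_filter, mem_univ, true_and, mem_image]
    constructor
    · intro hk; exact ⟨⟨(k : ℕ), hk⟩, Fin.ext rfl⟩
    · rintro ⟨a, rfl⟩; exact a.is_lt
  rw [key, Finset.card_image_of_injOn, himg,
    Finset.card_image_of_injective _ (Fin.castSucc_injective N), card_univ, Fintype.card_fin]
  intro a ha b hb h
  simp only [coe_filter, Set.mem_setOf_eq, mem_univ, true_and] at ha hb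
  simp only [phi, Prod.mk.injEq, decide_eq_decide] at h
  have := a.is_le; have := b.is_le
  apply Fin.ext; omega

lemma card_filter_image_phi (N : ℕ) (hN : 2 ≤ N) :
    (((univ : Finset (Fin (N + 1))).image (phi N)).filter fun t => t.2.1 = t.2.2).card
      = if Even N then 2 else 1 := by
  by_cases hE : Even N
  · have hE' : N % 2 = 0 := Nat.even_iff.mp hE
    rw [if_pos hE]
    have hset : (((univ : Finset (Fin (N + 1))).image (phi N)).filter fun t => t.2.1 = t.2.2)
        = {((0 : ℕ), false, false), (N / 2, false, false)} := by
      ext t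
      simp only [mem_filter, mem_image, mem_univ, true_and, mem_insert, mem_singleton]
      constructor
      · rintro ⟨⟨k, rfl⟩, hd⟩
        have hk := k.is_le
        simp only [phi, decide_eq_decide] at hd
        have e1 : phi N k = (min (k : ℕ) (N - (k : ℕ)), false, false) := by
          simp only [phi, Prod.mk.injEq, decide_eq_false_iff_not]
          exact ⟨trivial, by omega, by omega⟩
        rw [e1]
        have hm : min (k : ℕ) (N - (k : ℕ)) = 0 ∨ min (k : ℕ) (N - (k : ℕ)) = N / 2 := by
          omega
        rcases hm with hm | hm
        · left; rw [hm]
        · right; rw [hm]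
      · rintro (rfl | rfl)
        · refine ⟨⟨⟨0, by omega⟩, ?_⟩, rfl⟩
          simp only [phi, Prod.mk.injEq, decide_eq_false_iff_not]
          exact ⟨by omega, by omega, by omega⟩
        · refine ⟨⟨⟨N / 2, by omega⟩, ?_⟩, rfl⟩
          simp only [phi, Prod.mk.injEq, decide_eq_false_iff_not]
          exact ⟨by omega, by omega, by omega⟩
    rw [hset,
      Finset.card_insert_of_notMem (by simp only [mem_singleton, Prod.mk.injEq]; omega),
      card_singleton]
  · have hE' : ¬ N % 2 = 0 := fun h => hE (Nat.even_iff.mpr h)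
    rw [if_neg hE]
    have hset : (((univ : Finset (Fin (N + 1))).image (phi N)).filter fun t => t.2.1 = t.2.2)
        = {((0 : ℕ), false, false)} := by
      ext t
      simp only [mem_filter, mem_image, mem_univ, true_and, mem_singleton]
      constructor
      · rintro ⟨⟨k, rfl⟩, hd⟩
        have hk := k.is_le
        simp only [phi, decide_eq_decide] at hd
        have e1 : phi N k = (min (k : ℕ) (N - (k : ℕ)), false, false) := by
          simp only [phi, Prod.mk.injEq, decide_eq_false_iff_not]
          exact ⟨trivial, by omega, by omega⟩
        rw [e1]
        have hm : min (k : ℕ) (N - (k : ℕ)) = 0 := by omega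
        rw [hm]
      · rintro rfl
        refine ⟨⟨⟨0, by omega⟩, ?_⟩, rfl⟩
        simp only [phi, Prod.mk.injEq, decide_eq_false_iff_not]
        exact ⟨by omega, by omega, by omega⟩
    rw [hset, card_singleton]

/-- Orbit counting for a quotient map compatible with an involution. -/
lemma two_mul_card_image_of_involution {α β : Type*} [DecidableEq α] [DecidableEq β]
    (S : Finset α) (q : α → β) (σ : α → α)
    (hσS : ∀ a ∈ S, σ a ∈ S)
    (hinv : ∀ a, σ (σ a) = a)
    (hq : ∀ a b : α, q a = q b ↔ (b = a ∨ b = σ a)) :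
    2 * (S.image q).card = S.card + (S.filter fun a => σ a = a).card := by
  have h1 : S.card = ∑ b ∈ S.image q, (S.filter fun a => q a = b).card :=
    Finset.card_eq_sum_card_fiberwise fun a ha => mem_image_of_mem _ ha
  have h2 : (S.filter fun a => σ a = a).card
      = ∑ b ∈ S.image q, ((S.filter fun a => σ a = a).filter fun a => q a = b).card :=
    Finset.card_eq_sum_card_fiberwise fun a ha =>
      mem_image_of_mem _ (mem_of_mem_filter a ha)
  have h3 : 2 * (S.image q).card = ∑ _b ∈ S.image q, 2 := by
    rw [Finset.sum_const, smul_eq_mul, mul_comm]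
  rw [h1, h2, ← Finset.sum_add_distrib, h3]
  apply Finset.sum_congr rfl
  intro b hb
  obtain ⟨a, ha, rfl⟩ := mem_image.mp hb
  by_cases hfix : σ a = a
  · have e1 : S.filter (fun x => q x = q a) = {a} := by
      ext x
      simp only [mem_filter, mem_singleton]
      constructor
      · rintro ⟨hxS, hqx⟩
        rcases (hq a x).mp hqx.symm with h | h
        · exact h
        · rw [hfix] at h; exact h
      · rintro rfl; exact ⟨ha, rfl⟩
    have e2 : (S.filter fun x => σ x = x).filter (fun x => q x = q a) = {a} := by
      ext x
      simp only [mem_filter, mem_singleton]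
      constructor
      · rintro ⟨⟨hxS, _⟩, hqx⟩
        rcases (hq a x).mp hqx.symm with h | h
        · exact h
        · rw [hfix] at h; exact h
      · rintro rfl; exact ⟨⟨ha, hfix⟩, rfl⟩
    rw [e1, e2, card_singleton]
  · have hne : a ≠ σ a := fun h => hfix h.symm
    have e1 : S.filter (fun x => q x = q a) = {a, σ a} := by
      ext x
      simp only [mem_filter, mem_insert, mem_singleton]
      constructor
      · rintro ⟨hxS, hqx⟩
        exact (hq a x).mp hqx.symm
      · rintro (rfl | rfl)
        · exact ⟨ha, rfl⟩
        · exact ⟨hσS a ha, ((hq a (σ a)).mpr (Or.inr rfl)).symm⟩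
    have e2 : (S.filter fun x => σ x = x).filter (fun x => q x = q a) = ∅ := by
      rw [Finset.eq_empty_iff_forall_notMem]
      intro x hx
      simp only [mem_filter] at hx
      rcases (hq a x).mp hx.2.symm with h | h
      · subst h; exact hfix hx.1.2
      · subst h
        exact hne (by rw [← hx.1.2, hinv])
    rw [e1, e2, card_pair hne, card_empty]

section Main

variable {r : ℕ} (n : Fin r → ℕ)

/-- The ordered invariant. -/
def g (k : ∀ i : Fin r, Fin (n i + 1)) :
    (Fin r → ℕ) × Finset (Fin r) × Finset (Fin r) :=
  (fun i => min ((k i : ℕ)) (n i - (k i : ℕ)),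
   univ.filter fun i : Fin r => n i < 2 * (k i : ℕ) ∧ (k i : ℕ) < n i,
   univ.filter fun i : Fin r => 0 < (k i : ℕ) ∧ 2 * (k i : ℕ) < n i)

/-- Encoding of the ordered invariant as a function. -/
def iota (a : (Fin r → ℕ) × Finset (Fin r) × Finset (Fin r)) : Fin r → ℕ × Bool × Bool :=
  fun i => (a.1 i, decide (i ∈ a.2.1), decide (i ∈ a.2.2))

lemma iota_inj : Function.Injective (iota (r := r)) := by
  intro a b h
  have h' : ∀ i, a.1 i = b.1 i ∧ (i ∈ a.2.1 ↔ i ∈ b.2.1) ∧ (i ∈ a.2.2 ↔ i ∈ b.2.2) := by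
    intro i
    have := congrFun h i
    simp only [iota, Prod.mk.injEq, decide_eq_decide] at this
    exact this
  refine Prod.ext (funext fun i => (h' i).1) (Prod.ext ?_ ?_)
  · exact Finset.ext fun i => (h' i).2.1
  · exact Finset.ext fun i => (h' i).2.2

lemma iota_g (k : ∀ i : Fin r, Fin (n i + 1)) :
    iota (g n k) = fun i => phi (n i) (k i) := by
  funext i
  simp only [iota, g, phi, Prod.mk.injEq, decide_eq_decide, mem_filter, mem_univ, true_and]

lemma image_G :
    (univ : Finset (∀ i : Fin r, Fin (n i + 1))).image (fun k i => phi (n i) (k i))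
      = Fintype.piFinset fun i => (univ : Finset (Fin (n i + 1))).image (phi (n i)) := by
  rw [Fintype.piFinset_image, Fintype.piFinset_univ]

lemma diag_iff (a : (Fin r → ℕ) × Finset (Fin r) × Finset (Fin r)) :
    a.2.1 = a.2.2 ↔ ∀ i, (iota a i).2.1 = (iota a i).2.2 := by
  simp only [iota, decide_eq_decide]
  exact Finset.ext_iff

end Main

end HEFAux


open HEFAux in
/-- Number of isomorphism classes in `HEF(R,W)` for a critically-finite
`W = p₁^{n₁}⋯p_r^{n_r}` (nᵢ ≥ 2). Divisors of `W` up to units correspond to exponent vectors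
`k` with `k i ≤ n i`, and isomorphism classes in the ℤ₂-graded category `HEF(R,W)` correspond to
distinct values of the unordered invariant `k ↦ (m(k), {X(k), Y(k)})`, where
`m(k) i = min (k i) (n i - k i)`, `X(k) = {i | n i < 2*(k i) ∧ k i < n i}` and
`Y(k) = {i | 0 < k i ∧ 2*(k i) < n i}`. Their number is
`2^{|I⁰|} + Σ_{∅ ≠ K ⊆ Fin r} 2^{|I⁰| + |K ∩ I¹| − 1} ∏_{i ∈ K} ⌊(n i − 1)/2⌋`, where
`I⁰`, `I¹` are the sets of indices with even resp. odd `n i`. -/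
theorem count_iso_classes_HEF
    (r : ℕ) (hr : 1 ≤ r) (n : Fin r → ℕ) (hn : ∀ i, 2 ≤ n i) :
    (Finset.image
        (fun k : (∀ i : Fin r, Fin (n i + 1)) =>
          ((fun i : Fin r => min ((k i : ℕ)) (n i - (k i : ℕ))),
            s((Finset.univ.filter fun i : Fin r => n i < 2 * (k i : ℕ) ∧ (k i : ℕ) < n i),
              (Finset.univ.filter fun i : Fin r => 0 < (k i : ℕ) ∧ 2 * (k i : ℕ) < n i))))
        Finset.univ).card =
      2 ^ (Finset.univ.filter fun i : Fin r => Even (n i)).card +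
        ∑ K ∈ Finset.univ.powerset.filter (fun K : Finset (Fin r) => K.Nonempty),
          2 ^ ((Finset.univ.filter fun i : Fin r => Even (n i)).card +
              (K ∩ Finset.univ.filter fun i : Fin r => Odd (n i)).card - 1) *
            ∏ i ∈ K, (n i - 1) / 2 := by
  classical
  -- abbreviations
  have hq : ∀ a b : (Fin r → ℕ) × Finset (Fin r) × Finset (Fin r),
      ((a.1, Sym2.mk a.2.1 a.2.2) : (Fin r → ℕ) × Sym2 (Finset (Fin r))) = (b.1, Sym2.mk b.2.1 b.2.2)
        ↔ (b = a ∨ b = (a.1, a.2.swap)) := by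
    intro a b
    constructor
    · intro h
      injection h with h1 h2
      rcases Sym2.mk_eq_mk_iff.mp h2 with h2 | h2
      · left; exact Prod.ext h1.symm h2.symm
      · right
        have h3 := congrArg Prod.swap h2
        rw [Prod.swap_swap] at h3
        exact Prod.ext h1.symm h3.symm
    · rintro (rfl | rfl)
      · rfl
      · exact Prod.ext rfl (Sym2.mk_eq_mk_iff.mpr (Or.inr (Prod.swap_swap a.2).symm))
  have hσS : ∀ a ∈ (univ : Finset (∀ i : Fin r, Fin (n i + 1))).image (g n),
      ((a.1, a.2.swap) : (Fin r → ℕ) × Finset (Fin r) × Finset (Fin r))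
        ∈ (univ : Finset (∀ i : Fin r, Fin (n i + 1))).image (g n) := by
    intro a ha
    obtain ⟨k, -, rfl⟩ := mem_image.mp ha
    have hle : ∀ i, (k i : ℕ) ≤ n i := fun i => by have := (k i).is_le; omega
    refine mem_image.mpr
      ⟨fun i => ⟨n i - (k i : ℕ), by have := hle i; omega⟩, mem_univ _, ?_⟩
    refine Prod.ext ?_ (Prod.ext ?_ ?_)
    · funext i
      show min (n i - (k i : ℕ)) (n i - (n i - (k i : ℕ))) = min ((k i : ℕ)) (n i - (k i : ℕ))
      have := hle i; omega
    · ext i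
      simp only [g, Prod.swap, mem_filter, mem_univ, true_and]
      show (n i < 2 * (n i - (k i : ℕ)) ∧ (n i - (k i : ℕ)) < n i)
        ↔ (0 < (k i : ℕ) ∧ 2 * (k i : ℕ) < n i)
      have := hle i; omega
    · ext i
      simp only [g, Prod.swap, mem_filter, mem_univ, true_and]
      show (0 < (n i - (k i : ℕ)) ∧ 2 * (n i - (k i : ℕ)) < n i)
        ↔ (n i < 2 * (k i : ℕ) ∧ (k i : ℕ) < n i)
      have := hle i; omega
  have hmain := two_mul_card_image_of_involution
      ((univ : Finset (∀ i : Fin r, Fin (n i + 1))).image (g n))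
      (fun a => (a.1, Sym2.mk a.2.1 a.2.2)) (fun a => (a.1, a.2.swap)) hσS
      (fun a => Prod.ext rfl (Prod.swap_swap a.2)) hq
  -- identify the image in the statement with the image of q over S
  have himg : ((univ : Finset (∀ i : Fin r, Fin (n i + 1))).image (g n)).image
        (fun a => (a.1, Sym2.mk a.2.1 a.2.2))
      = Finset.image
        (fun k : (∀ i : Fin r, Fin (n i + 1)) =>
          ((fun i : Fin r => min ((k i : ℕ)) (n i - (k i : ℕ))),
            s((Finset.univ.filter fun i : Fin r => n i < 2 * (k i : ℕ) ∧ (k i : ℕ) < n i),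
              (Finset.univ.filter fun i : Fin r => 0 < (k i : ℕ) ∧ 2 * (k i : ℕ) < n i))))
        Finset.univ := by
    rw [Finset.image_image]
    rfl
  -- cardinality of the ordered-invariant image
  have hScard : ((univ : Finset (∀ i : Fin r, Fin (n i + 1))).image (g n)).card
      = ∏ i, n i := by
    rw [← Finset.card_image_of_injective _ iota_inj, Finset.image_image]
    have hcomp : iota ∘ g n = fun (k : ∀ i : Fin r, Fin (n i + 1)) (i : Fin r) =>
        phi (n i) (k i) := funext fun k => iota_g n k
    rw [hcomp, image_G, Fintype.card_piFinset]
    exact Finset.prod_congr rfl fun i _ => card_image_phi (n i) (le_trans one_le_two (hn i))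
  -- cardinality of the fixed-point set
  have hfixcard : (((univ : Finset (∀ i : Fin r, Fin (n i + 1))).image (g n)).filter
        (fun a => ((a.1, a.2.swap) : (Fin r → ℕ) × Finset (Fin r) × Finset (Fin r)) = a)).card
      = 2 ^ (Finset.univ.filter fun i : Fin r => Even (n i)).card := by
    have step1 : (((univ : Finset (∀ i : Fin r, Fin (n i + 1))).image (g n)).filter
          (fun a => ((a.1, a.2.swap) : (Fin r → ℕ) × Finset (Fin r) × Finset (Fin r)) = a))
        = ((univ : Finset (∀ i : Fin r, Fin (n i + 1))).image (g n)).filter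
          (fun a => a.2.1 = a.2.2) := by
      apply filter_congr
      intro a _
      constructor
      · intro h; exact congrArg (fun p => p.2.2) h
      · intro h; exact Prod.ext rfl (Prod.ext h.symm h)
    rw [step1, Finset.filter_image, ← Finset.card_image_of_injective _ iota_inj,
      Finset.image_image]
    have hcomp : iota ∘ g n = fun (k : ∀ i : Fin r, Fin (n i + 1)) (i : Fin r) =>
        phi (n i) (k i) := funext fun k => iota_g n k
    have hfiltcong : (univ.filter fun k : ∀ i : Fin r, Fin (n i + 1) => (g n k).2.1 = (g n k).2.2)
        = univ.filter fun k : ∀ i : Fin r, Fin (n i + 1) =>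
            ∀ i, (phi (n i) (k i)).2.1 = (phi (n i) (k i)).2.2 := by
      apply filter_congr
      intro k _
      rw [diag_iff (g n k), iota_g n k]
    rw [hcomp, hfiltcong]
    have hfi : ((univ.image (fun (k : ∀ i : Fin r, Fin (n i + 1)) (i : Fin r) => phi (n i) (k i))).filter
          (fun v => ∀ i, (v i).2.1 = (v i).2.2))
        = ((univ.filter fun k : ∀ i : Fin r, Fin (n i + 1) =>
            ∀ i, (phi (n i) (k i)).2.1 = (phi (n i) (k i)).2.2).image
            (fun (k : ∀ i : Fin r, Fin (n i + 1)) (i : Fin r) => phi (n i) (k i))) :=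
      Finset.filter_image
    rw [← hfi, image_G]
    have hpi : (Fintype.piFinset fun i =>
          (univ : Finset (Fin (n i + 1))).image (phi (n i))).filter
          (fun v => ∀ i, (v i).2.1 = (v i).2.2)
        = Fintype.piFinset fun i =>
            ((univ : Finset (Fin (n i + 1))).image (phi (n i))).filter
              fun t => t.2.1 = t.2.2 := by
      ext v
      simp only [mem_filter, Fintype.mem_piFinset]
      exact forall_and.symm
    rw [hpi, Fintype.card_piFinset]
    have : ∏ i, (((univ : Finset (Fin (n i + 1))).image (phi (n i))).filter
          (fun t => t.2.1 = t.2.2)).card = ∏ i, (if Even (n i) then 2 else 1) :=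
      Finset.prod_congr rfl fun i _ => card_filter_image_phi (n i) (hn i)
    rw [this, Finset.prod_ite, Finset.prod_const, Finset.prod_const, one_pow, mul_one]
  -- the right-hand side doubled
  have hprod : (∏ i, n i)
      = ∑ K ∈ (univ : Finset (Fin r)).powerset,
          2 ^ ((Finset.univ.filter fun i : Fin r => Even (n i)).card +
            (K ∩ Finset.univ.filter fun i : Fin r => Odd (n i)).card) *
          ∏ i ∈ K, (n i - 1) / 2 := by
    have h1 : (∏ i, n i) = ∏ i, (2 * ((n i - 1) / 2) + (if Even (n i) then 2 else 1)) := by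
      apply Finset.prod_congr rfl
      intro i _
      have h2 := hn i
      by_cases hE : Even (n i)
      · rw [if_pos hE]; rw [Nat.even_iff] at hE; omega
      · rw [if_neg hE]; rw [Nat.even_iff] at hE; omega
    rw [h1, Finset.prod_add]
    apply Finset.sum_congr rfl
    intro K hK
    have e1 : ∏ i ∈ K, (2 * ((n i - 1) / 2)) = 2 ^ K.card * ∏ i ∈ K, (n i - 1) / 2 := by
      rw [Finset.prod_mul_distrib, Finset.prod_const]
    have e2 : ∏ i ∈ univ \ K, (if Even (n i) then 2 else 1)
        = 2 ^ ((univ \ K).filter fun i => Even (n i)).card := by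
      rw [Finset.prod_ite, Finset.prod_const, Finset.prod_const, one_pow, mul_one]
    rw [e1, e2]
    have hexp : K.card + (((univ \ K)).filter fun i => Even (n i)).card
        = (Finset.univ.filter fun i : Fin r => Even (n i)).card +
          (K ∩ Finset.univ.filter fun i : Fin r => Odd (n i)).card := by
      have ha : ((univ \ K).filter fun i => Even (n i))
          = (Finset.univ.filter fun i : Fin r => Even (n i)) \ K := by
        ext i
        simp only [mem_filter, mem_sdiff, mem_univ, true_and]
        tauto
      have hb := Finset.card_sdiff_add_card_inter
        (Finset.univ.filter fun i : Fin r => Even (n i)) K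
      have hc := Finset.card_filter_add_card_filter_not
        (s := K) (p := fun i => Even (n i))
      have hd : K ∩ (Finset.univ.filter fun i : Fin r => Odd (n i))
          = K.filter fun i => ¬ Even (n i) := by
        ext i
        simp only [mem_inter, mem_filter, mem_univ, true_and, Nat.odd_iff, Nat.even_iff]
        constructor
        · rintro ⟨h1, h2⟩; exact ⟨h1, by omega⟩
        · rintro ⟨h1, h2⟩; exact ⟨h1, by omega⟩
      have he : (Finset.univ.filter fun i : Fin r => Even (n i)) ∩ K
          = K.filter fun i => Even (n i) := by
        ext i
        simp only [mem_inter, mem_filter, mem_univ, true_and]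
        tauto
      rw [ha, hd]
      rw [he] at hb
      omega
    rw [← hexp, pow_add]
    ring
  have hsplit : ∑ K ∈ (univ : Finset (Fin r)).powerset,
        2 ^ ((Finset.univ.filter fun i : Fin r => Even (n i)).card +
          (K ∩ Finset.univ.filter fun i : Fin r => Odd (n i)).card) *
        ∏ i ∈ K, (n i - 1) / 2
      = (∑ K ∈ Finset.univ.powerset.filter (fun K : Finset (Fin r) => K.Nonempty),
          2 ^ ((Finset.univ.filter fun i : Fin r => Even (n i)).card +
            (K ∩ Finset.univ.filter fun i : Fin r => Odd (n i)).card) *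
          ∏ i ∈ K, (n i - 1) / 2)
        + 2 ^ (Finset.univ.filter fun i : Fin r => Even (n i)).card := by
    rw [← Finset.sum_filter_add_sum_filter_not ((univ : Finset (Fin r)).powerset)
      (fun K => K.Nonempty)]
    congr 1
    have hne : ((univ : Finset (Fin r)).powerset.filter fun K => ¬ K.Nonempty) = {∅} := by
      ext K
      simp [Finset.not_nonempty_iff_eq_empty]
    rw [hne, Finset.sum_singleton]
    simp
  have hdup : ∀ K ∈ Finset.univ.powerset.filter (fun K : Finset (Fin r) => K.Nonempty),
      2 * (2 ^ ((Finset.univ.filter fun i : Fin r => Even (n i)).card +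
            (K ∩ Finset.univ.filter fun i : Fin r => Odd (n i)).card - 1) *
          ∏ i ∈ K, (n i - 1) / 2)
        = 2 ^ ((Finset.univ.filter fun i : Fin r => Even (n i)).card +
            (K ∩ Finset.univ.filter fun i : Fin r => Odd (n i)).card) *
          ∏ i ∈ K, (n i - 1) / 2 := by
    intro K hK
    have hKne : K.Nonempty := (mem_filter.mp hK).2
    have hpos : 1 ≤ (Finset.univ.filter fun i : Fin r => Even (n i)).card +
        (K ∩ Finset.univ.filter fun i : Fin r => Odd (n i)).card := by
      obtain ⟨i, hi⟩ := hKne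
      by_cases hev : Even (n i)
      · have hiA : i ∈ Finset.univ.filter (fun i : Fin r => Even (n i)) :=
          mem_filter.mpr ⟨mem_univ i, hev⟩
        have := Finset.card_pos.mpr ⟨i, hiA⟩
        omega
      · have hiI : i ∈ K ∩ Finset.univ.filter fun i : Fin r => Odd (n i) :=
          mem_inter.mpr ⟨hi, mem_filter.mpr ⟨mem_univ i, Nat.odd_iff.mpr (by
            rw [Nat.even_iff] at hev; omega)⟩⟩
        have := Finset.card_pos.mpr ⟨i, hiI⟩
        omega
    rw [← mul_assoc]
    congr 1
    rw [← pow_succ']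
    congr 1
    omega
  have hR : 2 * (2 ^ (Finset.univ.filter fun i : Fin r => Even (n i)).card +
        ∑ K ∈ Finset.univ.powerset.filter (fun K : Finset (Fin r) => K.Nonempty),
          2 ^ ((Finset.univ.filter fun i : Fin r => Even (n i)).card +
              (K ∩ Finset.univ.filter fun i : Fin r => Odd (n i)).card - 1) *
            ∏ i ∈ K, (n i - 1) / 2)
      = (∏ i, n i) + 2 ^ (Finset.univ.filter fun i : Fin r => Even (n i)).card := by
    rw [mul_add, Finset.mul_sum, Finset.sum_congr rfl hdup, hprod, hsplit]
    ring
  -- the left-hand side doubled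
  have hL : 2 * (Finset.image
        (fun k : (∀ i : Fin r, Fin (n i + 1)) =>
          ((fun i : Fin r => min ((k i : ℕ)) (n i - (k i : ℕ))),
            s((Finset.univ.filter fun i : Fin r => n i < 2 * (k i : ℕ) ∧ (k i : ℕ) < n i),
              (Finset.univ.filter fun i : Fin r => 0 < (k i : ℕ) ∧ 2 * (k i : ℕ) < n i))))
        Finset.univ).card
      = (∏ i, n i) + 2 ^ (Finset.univ.filter fun i : Fin r => Even (n i)).card := by
    rw [← himg, ← hScard, ← hfixcard]
    exact hmain
  have h2 := hL.trans hR.symm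
  exact Nat.eq_of_mul_eq_mul_left (by norm_num) h2
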